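/- Suppose 0 < α ≤ γ < 2 and 0 < α̂ ≤ γ̂ < 2. If (nπ/2)^α + (nπ/2)^γ = (nπ/2)^α̂ + (nπ/2)^γ̂ for all odd n ≥ 1, then α = α̂ and γ = γ̂. -/
import Mathlib

open Real

/-- If the eigenvalue identity holds for all odd `n`, the larger exponent on the
left cannot exceed the larger exponent on the right. -/
lemma aux_le (α γ α' γ' : ℝ)
    (hα : 0 < α) (hαγ : α ≤ γ)
    (hα' : 0 < α') (hαγ' : α' ≤ γ')
    (h : ∀ n : ℕ, 1 ≤ n → Odd n →
      ((n : ℝ) * π / 2) ^ α + ((n : ℝ) * π / 2) ^ γ =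
      ((n : ℝ) * π / 2) ^ α' + ((n : ℝ) * π / 2) ^ γ') :
    γ ≤ γ' := by
  by_contra hlt
  push_neg at hlt
  have hd : 0 < γ - γ' := by linarith
  set M : ℝ := 2 ^ ((γ - γ')⁻¹) with hM
  have hM1 : 1 < M := by
    rw [hM]
    exact Real.one_lt_rpow_iff_of_pos (by norm_num : (0:ℝ) < 2) |>.mpr (Or.inl ⟨by norm_num, inv_pos.mpr hd⟩)
  set N : ℕ := 2 * ⌈M⌉₊ + 1 with hN
  have hNodd : Odd N := ⟨⌈M⌉₊, by ring⟩
  have hN1 : 1 ≤ N := by omega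
  have hNM : M < (N : ℝ) := by
    have := Nat.le_ceil M
    have h2 : (⌈M⌉₊ : ℝ) + 1 ≤ (N : ℝ) := by
      have : ⌈M⌉₊ + 1 ≤ N := by omega
      exact_mod_cast this
    linarith
  set x : ℝ := (N : ℝ) * π / 2 with hx
  have hπ : (2:ℝ) < π := by linarith [Real.pi_gt_three]
  have hNx : (N : ℝ) ≤ x := by
    have hN0 : (0:ℝ) ≤ (N:ℝ) := by positivity
    rw [hx]
    nlinarith
  have hMx : M < x := lt_of_lt_of_le hNM hNx
  have hx1 : 1 < x := lt_trans hM1 hMx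
  have hx0 : 0 < x := by linarith
  have heq := h N hN1 hNodd
  rw [← hx] at heq
  -- x^γ ≤ x^α + x^γ = x^α' + x^γ' ≤ 2 x^γ'
  have h1 : x ^ γ ≤ x ^ α' + x ^ γ' := by
    have : (0:ℝ) ≤ x ^ α := Real.rpow_nonneg (le_of_lt hx0) α
    linarith [heq]
  have h2 : x ^ α' ≤ x ^ γ' := Real.rpow_le_rpow_left_iff hx1 |>.mpr hαγ'
  have h3 : x ^ γ ≤ 2 * x ^ γ' := by linarith
  -- hence x^(γ-γ') ≤ 2
  have hγ'pos : 0 < x ^ γ' := Real.rpow_pos_of_pos hx0 γ'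
  have h4 : x ^ (γ - γ') ≤ 2 := by
    rw [Real.rpow_sub hx0]
    rw [div_le_iff₀ hγ'pos]
    linarith
  -- but x^(γ-γ') > M^(γ-γ') = 2
  have h5 : M ^ (γ - γ') < x ^ (γ - γ') := by
    apply Real.rpow_lt_rpow (by positivity) hMx hd
  have h6 : M ^ (γ - γ') = 2 := by
    rw [hM, ← Real.rpow_mul (by norm_num : (0:ℝ) ≤ 2), inv_mul_cancel₀ (ne_of_gt hd),
      Real.rpow_one]
  linarith

/-- Equality of eigenvalue sequences along odd indices forces equality
of the fractional exponents. -/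
theorem exponents_unique (α γ α' γ' : ℝ)
    (hα : 0 < α) (hαγ : α ≤ γ) (hγ : γ < 2)
    (hα' : 0 < α') (hαγ' : α' ≤ γ') (hγ' : γ' < 2)
    (h : ∀ n : ℕ, 1 ≤ n → Odd n →
      ((n : ℝ) * π / 2) ^ α + ((n : ℝ) * π / 2) ^ γ =
      ((n : ℝ) * π / 2) ^ α' + ((n : ℝ) * π / 2) ^ γ') :
    α = α' ∧ γ = γ' := by
  have h' : ∀ n : ℕ, 1 ≤ n → Odd n →
      ((n : ℝ) * π / 2) ^ α' + ((n : ℝ) * π / 2) ^ γ' =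
      ((n : ℝ) * π / 2) ^ α + ((n : ℝ) * π / 2) ^ γ :=
    fun n h1 h2 => (h n h1 h2).symm
  have hγγ : γ = γ' :=
    le_antisymm (aux_le α γ α' γ' hα hαγ hα' hαγ' h)
      (aux_le α' γ' α γ hα' hαγ' hα hαγ h')
  have hπ : (2:ℝ) < π := by linarith [Real.pi_gt_three]
  have hx1 : (1:ℝ) < π / 2 := by linarith
  have heq := h 1 le_rfl odd_one
  simp only [Nat.cast_one, one_mul] at heq
  rw [hγγ] at heq
  have hαα : (π/2 : ℝ) ^ α = (π/2 : ℝ) ^ α' := by linarith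
  have : α = α' := by
    by_contra hne
    rcases lt_or_gt_of_ne hne with hlt | hlt
    · have := Real.rpow_lt_rpow_left_iff hx1 |>.mpr hlt
      linarith
    · have := Real.rpow_lt_rpow_left_iff hx1 |>.mpr hlt
      linarith
  exact ⟨this, hγγ⟩
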